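/- Theorem 2 (dynamic-regret bound): Under the MOSP setting with ε > V̄ and λ_1 = 0, the dynamic regret satisfies Reg_T := Σ_{t=1}^T f_t(x_t) − Σ_{t=1}^T f_t(x_t^*) ≤ (R/α)·V_x + λ̄·V_g + R²/(2α) + α·G²·T/2 + μ·M²·(T+1)/2, where λ̄ := μ·M + (2·G·R + R²/(2α) + μ·M²/2)/(ε − V̄). -/

import Mathlib

open scoped RealInnerProductSpace
open Finset

/-- Entrywise positive projection on `ℝ^m`. -/
noncomputable def posProj {m : ℕ} (v : EuclideanSpace ℝ (Fin m)) :
    EuclideanSpace ℝ (Fin m) := WithLp.toLp 2 (fun i => max (v i) 0)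

lemma posProj_nonneg {m : ℕ} (v : EuclideanSpace ℝ (Fin m)) (i : Fin m) : 0 ≤ posProj v i :=
  le_max_right (v i) 0

lemma le_posProj {m : ℕ} (v : EuclideanSpace ℝ (Fin m)) (i : Fin m) : v i ≤ posProj v i :=
  le_max_left (v i) 0

lemma euc_norm_le {m : ℕ} {v w : EuclideanSpace ℝ (Fin m)} (h : ∀ i, |v i| ≤ |w i|) :
    ‖v‖ ≤ ‖w‖ := by
  rw [EuclideanSpace.norm_eq, EuclideanSpace.norm_eq]
  apply Real.sqrt_le_sqrt
  apply Finset.sum_le_sum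
  intro i _
  rw [Real.norm_eq_abs, Real.norm_eq_abs]
  exact pow_le_pow_left₀ (abs_nonneg _) (h i) 2

lemma norm_posProj_le {m : ℕ} (v : EuclideanSpace ℝ (Fin m)) : ‖posProj v‖ ≤ ‖v‖ := by
  apply euc_norm_le
  intro i
  simp only [posProj, WithLp.ofLp_toLp]
  rcases le_or_gt (v i) 0 with h | h
  · rw [max_eq_right h, abs_zero]; exact abs_nonneg _
  · rw [max_eq_left h.le]

lemma inner_le_norm_posProj {m : ℕ} {lam d : EuclideanSpace ℝ (Fin m)}
    (h : ∀ i, 0 ≤ lam i) : ⟪lam, d⟫ ≤ ‖lam‖ * ‖posProj d‖ := by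
  calc ⟪lam, d⟫ ≤ ⟪lam, posProj d⟫ := by
        rw [PiLp.inner_apply, PiLp.inner_apply]
        apply Finset.sum_le_sum
        intro i _
        simp only [RCLike.inner_apply, conj_trivial]
        exact mul_le_mul_of_nonneg_right (le_posProj d i) (h i)
    _ ≤ ‖lam‖ * ‖posProj d‖ := real_inner_le_norm _ _

lemma inner_nonpos_of {m : ℕ} {lam d : EuclideanSpace ℝ (Fin m)}
    (h : ∀ i, 0 ≤ lam i) (hd : ∀ i, d i ≤ 0) : ⟪lam, d⟫ ≤ 0 := by
  rw [PiLp.inner_apply]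
  apply Finset.sum_nonpos
  intro i _
  simp only [RCLike.inner_apply, conj_trivial]
  exact mul_nonpos_of_nonpos_of_nonneg (hd i) (h i)

lemma norm_le_sum_of_nonneg {m : ℕ} {lam : EuclideanSpace ℝ (Fin m)}
    (h : ∀ i, 0 ≤ lam i) : ‖lam‖ ≤ ∑ i, lam i := by
  rw [EuclideanSpace.norm_eq]
  have h1 : ∑ i, ‖lam i‖ ^ 2 ≤ (∑ i, lam i) ^ 2 := by
    calc ∑ i, ‖lam i‖ ^ 2 = ∑ i, lam i * lam i := by
          apply Finset.sum_congr rfl; intro i _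
          rw [Real.norm_eq_abs, sq_abs]; ring
      _ ≤ ∑ i, lam i * (∑ j, lam j) := by
          apply Finset.sum_le_sum; intro i _
          exact mul_le_mul_of_nonneg_left (Finset.single_le_sum (fun j _ => h j) (Finset.mem_univ i)) (h i)
      _ = (∑ i, lam i) ^ 2 := by rw [← Finset.sum_mul]; ring
  calc Real.sqrt (∑ i, ‖lam i‖ ^ 2) ≤ Real.sqrt ((∑ i, lam i) ^ 2) := Real.sqrt_le_sqrt h1
    _ = |∑ i, lam i| := Real.sqrt_sq_eq_abs _
    _ = ∑ i, lam i := abs_of_nonneg (Finset.sum_nonneg fun i _ => h i)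

lemma inner_le_neg_eps {m : ℕ} {lam d : EuclideanSpace ℝ (Fin m)} {ε : ℝ} (hε : 0 ≤ ε)
    (h : ∀ i, 0 ≤ lam i) (hd : ∀ i, d i ≤ -ε) : ⟪lam, d⟫ ≤ -(ε * ‖lam‖) := by
  calc ⟪lam, d⟫ ≤ ∑ i, lam i * (-ε) := by
        rw [PiLp.inner_apply]
        apply Finset.sum_le_sum
        intro i _
        simp only [RCLike.inner_apply, conj_trivial]
        rw [mul_comm]; exact mul_le_mul_of_nonneg_left (hd i) (h i)
    _ = -(ε * ∑ i, lam i) := by rw [← Finset.sum_mul]; ring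
    _ ≤ -(ε * ‖lam‖) := by
        have := norm_le_sum_of_nonneg h
        nlinarith [norm_nonneg lam]

lemma convex_grad_ineq {n : ℕ} {f : EuclideanSpace ℝ (Fin n) → ℝ}
    (hconv : ConvexOn ℝ Set.univ f) (hdiff : Differentiable ℝ f)
    (x y : EuclideanSpace ℝ (Fin n)) : f x - f y ≤ ⟪gradient f x, x - y⟫ := by
  set φ : ℝ → ℝ := fun θ => f (x + θ • (y - x)) with hφ
  have hgrad : HasGradientAt f (gradient f x) x := (hdiff x).hasGradientAt
  have hfder := hgrad.hasFDerivAt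
  have hderφ : HasDerivAt φ ⟪gradient f x, y - x⟫ 0 := by
    have hcurve : HasDerivAt (fun θ : ℝ => x + θ • (y - x)) (y - x) 0 := by
      simpa using ((hasDerivAt_id (0:ℝ)).smul_const (y - x)).const_add x
    have h0 : x + (0:ℝ) • (y - x) = x := by simp
    have hfder' : HasFDerivAt f (InnerProductSpace.toDual ℝ _ (gradient f x)) (x + (0:ℝ) • (y - x)) := by
      rwa [h0]
    have := hfder'.comp_hasDerivAt 0 hcurve
    exact this.congr_deriv (by simp)
  have hφconv : ConvexOn ℝ Set.univ φ := by
    have h1 := hconv.comp_affineMap (AffineMap.lineMap x y : ℝ →ᵃ[ℝ] EuclideanSpace ℝ (Fin n))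
    have h2 : (⇑(AffineMap.lineMap x y : ℝ →ᵃ[ℝ] EuclideanSpace ℝ (Fin n))) ⁻¹' Set.univ = Set.univ := by simp
    have h3 : (f ∘ ⇑(AffineMap.lineMap x y : ℝ →ᵃ[ℝ] EuclideanSpace ℝ (Fin n))) = φ := by
      funext θ
      simp [hφ, AffineMap.lineMap_apply, Function.comp]
      congr 1
      module
    rw [h2, h3] at h1
    exact h1
  have hslope := hφconv.le_slope_of_hasDerivAt (Set.mem_univ (0:ℝ)) (Set.mem_univ (1:ℝ))
    zero_lt_one hderφ
  have : φ 1 = f y := by simp [hφ]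
  have h0 : φ 0 = f x := by simp [hφ]
  rw [slope_def_field, this, h0, show (1:ℝ) - 0 = 1 by norm_num, div_one] at hslope
  have : ⟪gradient f x, x - y⟫ = -⟪gradient f x, y - x⟫ := by
    rw [← inner_neg_right]; congr 1; abel
  linarith [hslope]

lemma comb_norm_sq {n : ℕ} (a b c : EuclideanSpace ℝ (Fin n)) (θ : ℝ) :
    ‖θ • a + (1 - θ) • b - c‖ ^ 2 =
      θ * ‖a - c‖ ^ 2 + (1 - θ) * ‖b - c‖ ^ 2 - θ * (1 - θ) * ‖a - b‖ ^ 2 := by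
  have h1 : θ • a + (1 - θ) • b - c = θ • (a - c) + (1 - θ) • (b - c) := by module
  have h2 : a - b = (a - c) - (b - c) := by abel
  rw [h1, h2]
  set u := a - c
  set w := b - c
  rw [← real_inner_self_eq_norm_sq, ← real_inner_self_eq_norm_sq, ← real_inner_self_eq_norm_sq,
    ← real_inner_self_eq_norm_sq]
  simp only [inner_add_add_self, inner_sub_sub_self, real_inner_smul_left, real_inner_smul_right]
  ring_nf

lemma strong_min {n : ℕ} {X : Set (EuclideanSpace ℝ (Fin n))} (hXconv : Convex ℝ X)
    {ψ : EuclideanSpace ℝ (Fin n) → ℝ}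
    (hψ : ∀ p q : EuclideanSpace ℝ (Fin n), ∀ θ : ℝ, 0 ≤ θ → θ ≤ 1 →
      ψ (θ • p + (1 - θ) • q) ≤ θ * ψ p + (1 - θ) * ψ q)
    {α : ℝ} (hα : 0 < α) {c xm z : EuclideanSpace ℝ (Fin n)} (hxm : xm ∈ X) (hz : z ∈ X)
    (hmin : ∀ w ∈ X, ψ xm + ‖xm - c‖ ^ 2 / (2 * α) ≤ ψ w + ‖w - c‖ ^ 2 / (2 * α)) :
    ψ xm + ‖xm - c‖ ^ 2 / (2 * α) + ‖z - xm‖ ^ 2 / (2 * α) ≤ ψ z + ‖z - c‖ ^ 2 / (2 * α) := by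
  have hnorm : ‖xm - z‖ = ‖z - xm‖ := by rw [← norm_neg]; congr 1; abel
  set β : ℝ := (2 * α)⁻¹ with hβdef
  have hβ : 0 < β := by positivity
  have hdiv : ∀ r : ℝ, r / (2 * α) = r * β := fun r => div_eq_mul_inv r _
  simp only [hdiv] at hmin ⊢
  set D : ℝ := ψ z + ‖z - c‖ ^ 2 * β - (ψ xm + ‖xm - c‖ ^ 2 * β) with hD
  set K : ℝ := ‖z - xm‖ ^ 2 * β with hK
  have hK0 : 0 ≤ K := by positivity
  suffices h : K ≤ D by simp only [hD, hK] at h ⊢; linarith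
  have key : ∀ θ : ℝ, 0 ≤ θ → θ < 1 → θ * K ≤ D := by
    intro θ hθ0 hθ1
    have hw : θ • xm + (1 - θ) • z ∈ X := hXconv hxm hz hθ0 (by linarith) (by ring)
    have h1 := hmin _ hw
    have h2 := hψ xm z θ hθ0 hθ1.le
    have h3 := comb_norm_sq xm z c θ
    have hcomb : ψ xm + ‖xm - c‖ ^ 2 * β ≤ θ * ψ xm + (1 - θ) * ψ z +
        (θ * ‖xm - c‖ ^ 2 + (1 - θ) * ‖z - c‖ ^ 2 - θ * (1 - θ) * ‖xm - z‖ ^ 2) * β := by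
      rw [h3] at h1
      nlinarith [h1, h2, hβ]
    have h5 : (1 - θ) * (θ * (‖xm - z‖ ^ 2 * β)) ≤ (1 - θ) * D := by
      simp only [hD]
      nlinarith [hcomb]
    have h6 : θ * (‖xm - z‖ ^ 2 * β) ≤ D :=
      le_of_mul_le_mul_left h5 (by linarith : (0:ℝ) < 1 - θ)
    rw [hnorm] at h6
    simp only [hK]
    nlinarith [h6]
  by_contra hcon
  push_neg at hcon
  have hD0 : 0 ≤ D := by simpa using key 0 le_rfl one_pos
  have hKpos : 0 < K := lt_of_le_of_lt hD0 hcon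
  have hθ : D / K < 1 := (div_lt_one hKpos).2 hcon
  have hθ0 : 0 ≤ D / K := div_nonneg hD0 hK0
  have h3 := key ((D / K + 1) / 2) (by positivity) (by linarith)
  have h4 : D / K < (D / K + 1) / 2 := by linarith
  have : D < (D / K + 1) / 2 * K := by
    calc D = D / K * K := by field_simp
      _ < (D / K + 1) / 2 * K := mul_lt_mul_of_pos_right h4 hKpos
  linarith

lemma amgm_div {α G s : ℝ} (hα : 0 < α) : G * s ≤ α * G ^ 2 / 2 + s ^ 2 / (2 * α) := by
  have h : α * G ^ 2 / 2 + s ^ 2 / (2 * α) - G * s = (α * G - s) ^ 2 / (2 * α) := by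
    field_simp; ring
  nlinarith [div_nonneg (sq_nonneg (α * G - s)) (by linarith : (0:ℝ) ≤ 2 * α)]

lemma drift_div {p q A c μ : ℝ} (hμ : 0 < μ) (h : q ≤ p + 2 * μ * A + μ ^ 2 * c) :
    -A ≤ μ * c / 2 + (p - q) / (2 * μ) := by
  have h2 : -A - μ * c / 2 ≤ (p - q) / (2 * μ) := by
    rw [le_div_iff₀ (by linarith : (0:ℝ) < 2 * μ)]
    nlinarith [h]
  linarith

lemma sq_diff_le {n : ℕ} {R : ℝ} {p q z : EuclideanSpace ℝ (Fin n)}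
    (hp : ‖p - z‖ ≤ R) (hq : ‖q - z‖ ≤ R) :
    ‖p - z‖ ^ 2 - ‖q - z‖ ^ 2 ≤ 2 * R * ‖p - q‖ := by
  have h := norm_sub_norm_le (p - z) (q - z)
  have he : p - z - (q - z) = p - q := by abel
  rw [he] at h
  have h1 : 0 ≤ ‖p - z‖ + ‖q - z‖ := by positivity
  have h2 : (0:ℝ) ≤ 2 * R - ‖p - z‖ - ‖q - z‖ := by linarith
  nlinarith [mul_nonneg h1 (sub_nonneg.2 h), mul_nonneg h2 (norm_nonneg (p - q))]

lemma norm_add_smul_sq {m : ℕ} (lam w : EuclideanSpace ℝ (Fin m)) (μ : ℝ) :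
    ‖lam + μ • w‖ ^ 2 = ‖lam‖ ^ 2 + 2 * μ * ⟪lam, w⟫ + μ ^ 2 * ‖w‖ ^ 2 := by
  rw [norm_add_sq_real, real_inner_smul_right, norm_smul]
  simp only [Real.norm_eq_abs, mul_pow, sq_abs]
  ring
set_option maxHeartbeats 2000000 in
/-- Theorem 2 (dynamic-regret bound) for the MOSP recursion. -/
theorem mosp_dynamic_regret_bound {n m : ℕ} (hm : 0 < m)
    (T : ℕ) (hT : 1 ≤ T)
    (X : Set (EuclideanSpace ℝ (Fin n))) (hXne : X.Nonempty) (hXconv : Convex ℝ X)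
    (R G M ε Vbar α μ : ℝ)
    (hR : ∀ x ∈ X, ∀ y ∈ X, ‖x - y‖ ≤ R)
    (f : ℕ → EuclideanSpace ℝ (Fin n) → ℝ)
    (hfconv : ∀ t, ConvexOn ℝ Set.univ (f t))
    (hfdiff : ∀ t, Differentiable ℝ (f t))
    (hG : ∀ t, ∀ x ∈ X, ‖gradient (f t) x‖ ≤ G)
    (g : ℕ → EuclideanSpace ℝ (Fin n) → EuclideanSpace ℝ (Fin m))
    (hgconv : ∀ t i, ConvexOn ℝ Set.univ fun x => g t x i)
    (hM : ∀ t, ∀ x ∈ X, ‖g t x‖ ≤ M)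
    (hε : 0 < ε)
    (hSlater : ∃ xt ∈ X, ∀ t, ∀ i, g t xt i ≤ -ε)
    (hVbar : 0 ≤ Vbar)
    (hvar : ∀ t, ∀ x ∈ X, ‖posProj (g (t + 1) x - g t x)‖ ≤ Vbar)
    (hεV : Vbar < ε)
    (hα : 0 < α) (hμ : 0 < μ)
    (x : ℕ → EuclideanSpace ℝ (Fin n))
    (lam : ℕ → EuclideanSpace ℝ (Fin m))
    (hx0 : x 0 ∈ X) (hlam1 : lam 1 = 0)
    (hprimal : ∀ t, 1 ≤ t → x t ∈ X ∧ ∀ z ∈ X,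
      ⟪gradient (f (t - 1)) (x (t - 1)), x t - x (t - 1)⟫ + ⟪lam t, g (t - 1) (x t)⟫ +
          ‖x t - x (t - 1)‖ ^ 2 / (2 * α) ≤
        ⟪gradient (f (t - 1)) (x (t - 1)), z - x (t - 1)⟫ + ⟪lam t, g (t - 1) z⟫ +
          ‖z - x (t - 1)‖ ^ 2 / (2 * α))
    (hdual : ∀ t, 1 ≤ t → lam (t + 1) = posProj (lam t + μ • g t (x t)))
    (xstar : ℕ → EuclideanSpace ℝ (Fin n))
    (hxstar0 : xstar 0 ∈ X)
    (hxstar : ∀ t, 1 ≤ t → t ≤ T → xstar t ∈ X ∧ (∀ i, g t (xstar t) i ≤ 0) ∧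
      ∀ z ∈ X, (∀ i, g t z i ≤ 0) → f t (xstar t) ≤ f t z)
    (v : ℕ → ℝ) (hv : ∀ t, 0 ≤ v t)
    (hvarv : ∀ t, ∀ x ∈ X, ‖posProj (g (t + 1) x - g t x)‖ ≤ v t) :
    ∑ t ∈ Icc 1 T, f t (x t) - ∑ t ∈ Icc 1 T, f t (xstar t) ≤
      R / α * (∑ t ∈ Icc 1 T, ‖xstar t - xstar (t - 1)‖) +
        (μ * M + (2 * G * R + R ^ 2 / (2 * α) + μ * M ^ 2 / 2) / (ε - Vbar)) *
          (∑ t ∈ Icc 1 T, v t) +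
        R ^ 2 / (2 * α) + α * G ^ 2 * T / 2 + μ * M ^ 2 * (T + 1) / 2 := by
  obtain ⟨x₀, hx₀⟩ := hXne
  obtain ⟨xs, hxsX, hxs⟩ := hSlater
  have hR0 : 0 ≤ R := by have := hR x₀ hx₀ x₀ hx₀; simpa using this
  have hG0 : 0 ≤ G := le_trans (norm_nonneg _) (hG 0 x₀ hx₀)
  have hM0 : 0 ≤ M := le_trans (norm_nonneg _) (hM 0 x₀ hx₀)
  have hden : 0 < ε - Vbar := by linarith
  have hnum : 0 ≤ 2 * G * R + R ^ 2 / (2 * α) + μ * M ^ 2 / 2 := by positivity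
  set B : ℝ := (2 * G * R + R ^ 2 / (2 * α) + μ * M ^ 2 / 2) / (ε - Vbar) with hBdef
  set L : ℝ := μ * M + B with hLdef
  have hB0 : 0 ≤ B := div_nonneg hnum hden.le
  have hL0 : 0 ≤ L := by positivity
  have hBmul : B * (ε - Vbar) = 2 * G * R + R ^ 2 / (2 * α) + μ * M ^ 2 / 2 := by
    rw [hBdef]; field_simp
  have hxX : ∀ t, x t ∈ X := by
    intro t
    rcases t with _ | s
    · exact hx0
    · exact (hprimal (s + 1) (by omega)).1
  have hlamnn : ∀ t, 1 ≤ t → ∀ i, 0 ≤ lam t i := by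
    intro t ht i
    rcases t with _ | s
    · omega
    rcases s with _ | u
    · rw [hlam1]; simp
    · rw [hdual (u + 1) (by omega)]; exact posProj_nonneg _ i
  -- Slater drift bound
  have key : ∀ s : ℕ, 1 ≤ s →
      ⟪lam s, g s (x s)⟫ ≤ 2 * G * R + R ^ 2 / (2 * α) - (ε - Vbar) * ‖lam s‖ := by
    rintro ⟨⟩ hs
    · omega
    rename_i u
    have hmin := (hprimal (u + 1) (by omega)).2
    simp only [Nat.add_sub_cancel] at hmin
    have h1 := hmin xs hxsX
    have hxu1 : x (u + 1) ∈ X := hxX (u + 1)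
    have hnn : ∀ i, 0 ≤ lam (u + 1) i := hlamnn (u + 1) (by omega)
    -- bound the linear term
    have hlin : ⟪gradient (f u) (x u), xs - x u⟫ -
        ⟪gradient (f u) (x u), x (u + 1) - x u⟫ ≤ G * R := by
      have he : ⟪gradient (f u) (x u), xs - x u⟫ - ⟪gradient (f u) (x u), x (u + 1) - x u⟫ =
          ⟪gradient (f u) (x u), xs - x (u + 1)⟫ := by
        rw [← inner_sub_right]; congr 1; abel
      rw [he]
      calc ⟪gradient (f u) (x u), xs - x (u + 1)⟫ ≤ ‖gradient (f u) (x u)‖ * ‖xs - x (u + 1)‖ :=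
            real_inner_le_norm _ _
        _ ≤ G * R := mul_le_mul (hG u (x u) (hxX u)) (hR xs hxsX (x (u + 1)) hxu1)
            (norm_nonneg _) hG0
    have hslater : ⟪lam (u + 1), g u xs⟫ ≤ -(ε * ‖lam (u + 1)‖) :=
      inner_le_neg_eps hε.le hnn (hxs u)
    have hRb : ‖xs - x u‖ ^ 2 / (2 * α) ≤ R ^ 2 / (2 * α) := by
      have h := hR xs hxsX (x u) (hxX u)
      have h2 : ‖xs - x u‖ ^ 2 ≤ R ^ 2 := by nlinarith [norm_nonneg (xs - x u)]
      exact div_le_div_of_nonneg_right h2 (by linarith) |>.trans_eq rfl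
    have hq : 0 ≤ ‖x (u + 1) - x u‖ ^ 2 / (2 * α) := by positivity
    have hstep1 : ⟪lam (u + 1), g u (x (u + 1))⟫ ≤
        G * R + R ^ 2 / (2 * α) - ε * ‖lam (u + 1)‖ := by linarith
    -- shift constraint index from u to u+1
    have hsplit : ⟪lam (u + 1), g (u + 1) (x (u + 1))⟫ =
        ⟪lam (u + 1), g u (x (u + 1))⟫ +
          ⟪lam (u + 1), g (u + 1) (x (u + 1)) - g u (x (u + 1))⟫ := by
      rw [← inner_add_right]; congr 1; abel
    have hshift : ⟪lam (u + 1), g (u + 1) (x (u + 1)) - g u (x (u + 1))⟫ ≤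
        ‖lam (u + 1)‖ * Vbar := by
      calc ⟪lam (u + 1), g (u + 1) (x (u + 1)) - g u (x (u + 1))⟫ ≤
            ‖lam (u + 1)‖ * ‖posProj (g (u + 1) (x (u + 1)) - g u (x (u + 1)))‖ :=
            inner_le_norm_posProj hnn
        _ ≤ ‖lam (u + 1)‖ * Vbar :=
            mul_le_mul_of_nonneg_left (hvar u _ hxu1) (norm_nonneg _)
    have hGR : 0 ≤ G * R := mul_nonneg hG0 hR0
    rw [hsplit]
    nlinarith [hstep1, hshift, norm_nonneg (lam (u + 1))]
  -- dual variable bound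
  have lamBound : ∀ s : ℕ, 1 ≤ s → ‖lam s‖ ≤ L := by
    intro s hs
    induction s, hs using Nat.le_induction with
    | base => rw [hlam1]; simpa using hL0
    | succ s hs ih =>
      have hupd := hdual s hs
      have hgs : ‖g s (x s)‖ ≤ M := hM s _ (hxX s)
      have h1 : ‖lam (s + 1)‖ ≤ ‖lam s + μ • g s (x s)‖ := by
        rw [hupd]; exact norm_posProj_le _
      rcases le_or_gt ‖lam s‖ B with hc | hc
      · have h2 : ‖lam s + μ • g s (x s)‖ ≤ ‖lam s‖ + μ * M := by
          calc ‖lam s + μ • g s (x s)‖ ≤ ‖lam s‖ + ‖μ • g s (x s)‖ := norm_add_le _ _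
            _ ≤ ‖lam s‖ + μ * M := by
                rw [norm_smul, Real.norm_eq_abs, abs_of_pos hμ]
                have := mul_le_mul_of_nonneg_left hgs hμ.le
                linarith
        rw [hLdef]; linarith
      · have hkey := key s hs
        have hsq : ‖lam s + μ • g s (x s)‖ ^ 2 ≤
            ‖lam s‖ ^ 2 + 2 * μ * ⟪lam s, g s (x s)⟫ + μ ^ 2 * M ^ 2 := by
          rw [norm_add_smul_sq]
          have : ‖g s (x s)‖ ^ 2 ≤ M ^ 2 := by nlinarith [norm_nonneg (g s (x s))]
          nlinarith [sq_nonneg μ]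
        have hdrop : ‖lam s + μ • g s (x s)‖ ^ 2 ≤ ‖lam s‖ ^ 2 := by
          have hB' : (ε - Vbar) * ‖lam s‖ > 2 * G * R + R ^ 2 / (2 * α) + μ * M ^ 2 / 2 := by
            have := mul_lt_mul_of_pos_left hc hden
            nlinarith [this, hBmul]
          nlinarith [hkey, hsq, hμ]
        have : ‖lam s + μ • g s (x s)‖ ≤ ‖lam s‖ := by
          nlinarith [norm_nonneg (lam s + μ • g s (x s)), norm_nonneg (lam s)]
        linarith
  -- per-slot regret bound
  have slot : ∀ t : ℕ, 1 ≤ t → t ≤ T →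
      f t (x t) - f t (xstar t) ≤ α * G ^ 2 / 2 + L * v t + μ * M ^ 2 / 2 +
        (‖lam (t + 1)‖ ^ 2 - ‖lam (t + 2)‖ ^ 2) / (2 * μ) +
        (‖xstar t - x t‖ ^ 2 - ‖xstar t - x (t + 1)‖ ^ 2) / (2 * α) := by
    intro t ht1 ht2
    obtain ⟨hxsT, hgfeas, -⟩ := hxstar t ht1 ht2
    have hxt : x t ∈ X := hxX t
    have hxt1 : x (t + 1) ∈ X := hxX (t + 1)
    have hnn : ∀ i, 0 ≤ lam (t + 1) i := hlamnn (t + 1) (by omega)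
    have hp := (hprimal (t + 1) (by omega)).2
    simp only [Nat.add_sub_cancel] at hp
    set gr := gradient (f t) (x t) with hgr
    set ψ : EuclideanSpace ℝ (Fin n) → ℝ :=
      fun w => ⟪gr, w - x t⟫ + ⟪lam (t + 1), g t w⟫ with hψdef
    have hψconv : ∀ p q : EuclideanSpace ℝ (Fin n), ∀ θ : ℝ, 0 ≤ θ → θ ≤ 1 →
        ψ (θ • p + (1 - θ) • q) ≤ θ * ψ p + (1 - θ) * ψ q := by
      intro p q θ h0 h1
      simp only [hψdef]
      have hlin : ⟪gr, (θ • p + (1 - θ) • q) - x t⟫ =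
          θ * ⟪gr, p - x t⟫ + (1 - θ) * ⟪gr, q - x t⟫ := by
        have he : (θ • p + (1 - θ) • q) - x t = θ • (p - x t) + (1 - θ) • (q - x t) := by
          module
        rw [he, inner_add_right, real_inner_smul_right, real_inner_smul_right]
      have hgpart : ⟪lam (t + 1), g t (θ • p + (1 - θ) • q)⟫ ≤
          θ * ⟪lam (t + 1), g t p⟫ + (1 - θ) * ⟪lam (t + 1), g t q⟫ := by
        rw [PiLp.inner_apply, PiLp.inner_apply, PiLp.inner_apply]
        simp only [RCLike.inner_apply, conj_trivial]
        rw [Finset.mul_sum, Finset.mul_sum, ← Finset.sum_add_distrib]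
        apply Finset.sum_le_sum
        intro i _
        have hcv := (hgconv t i).2 (Set.mem_univ p) (Set.mem_univ q) h0
          (show (0:ℝ) ≤ 1 - θ by linarith) (show θ + (1 - θ) = 1 by ring)
        simp only [smul_eq_mul] at hcv
        rw [mul_comm (g t (θ • p + (1 - θ) • q) i), mul_comm (g t p i), mul_comm (g t q i)]
        calc lam (t + 1) i * g t (θ • p + (1 - θ) • q) i
            ≤ lam (t + 1) i * (θ * g t p i + (1 - θ) * g t q i) :=
              mul_le_mul_of_nonneg_left hcv (hnn i)
          _ = θ * (lam (t + 1) i * g t p i) + (1 - θ) * (lam (t + 1) i * g t q i) := by ring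
      nlinarith [hlin, hgpart]
    have hminψ : ∀ w ∈ X, ψ (x (t + 1)) + ‖x (t + 1) - x t‖ ^ 2 / (2 * α) ≤
        ψ w + ‖w - x t‖ ^ 2 / (2 * α) := by
      intro w hw
      have h := hp w hw
      simp only [hψdef]
      linarith [h]
    have hsm := strong_min hXconv hψconv hα hxt1 hxsT hminψ
    simp only [hψdef] at hsm
    have hgrineq := convex_grad_ineq (hfconv t) (hfdiff t) (x t) (xstar t)
    rw [← hgr] at hgrineq
    have hsplit : ⟪gr, x t - xstar t⟫ = ⟪gr, x t - x (t + 1)⟫ + ⟪gr, x (t + 1) - xstar t⟫ := by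
      rw [← inner_add_right]; congr 1; abel
    have hsplit3 : ⟪gr, x (t + 1) - xstar t⟫ =
        ⟪gr, x (t + 1) - x t⟫ - ⟪gr, xstar t - x t⟫ := by
      rw [← inner_sub_right]; congr 1; abel
    have hCS : ⟪gr, x t - x (t + 1)⟫ ≤ G * ‖x (t + 1) - x t‖ := by
      calc ⟪gr, x t - x (t + 1)⟫ ≤ ‖gr‖ * ‖x t - x (t + 1)‖ := real_inner_le_norm _ _
        _ ≤ G * ‖x (t + 1) - x t‖ := by
            rw [norm_sub_rev]
            exact mul_le_mul_of_nonneg_right (hG t (x t) hxt) (norm_nonneg _)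
    have hamgm := amgm_div (α := α) (G := G) (s := ‖x (t + 1) - x t‖) hα
    have hfeas : ⟪lam (t + 1), g t (xstar t)⟫ ≤ 0 := inner_nonpos_of hnn hgfeas
    have hsplit2 : ⟪lam (t + 1), g t (x (t + 1))⟫ =
        ⟪lam (t + 1), g (t + 1) (x (t + 1))⟫ -
          ⟪lam (t + 1), g (t + 1) (x (t + 1)) - g t (x (t + 1))⟫ := by
      rw [← inner_sub_right]; congr 1; abel
    have hshift : ⟪lam (t + 1), g (t + 1) (x (t + 1)) - g t (x (t + 1))⟫ ≤ L * v t := by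
      calc ⟪lam (t + 1), g (t + 1) (x (t + 1)) - g t (x (t + 1))⟫
          ≤ ‖lam (t + 1)‖ * ‖posProj (g (t + 1) (x (t + 1)) - g t (x (t + 1)))‖ :=
            inner_le_norm_posProj hnn
        _ ≤ L * v t := mul_le_mul (lamBound (t + 1) (by omega)) (hvarv t _ hxt1)
            (norm_nonneg _) hL0
    have hdr := hdual (t + 1) (by omega)
    have hd1 : ‖lam (t + 2)‖ ≤ ‖lam (t + 1) + μ • g (t + 1) (x (t + 1))‖ := by
      rw [show t + 2 = t + 1 + 1 from rfl, hdr]; exact norm_posProj_le _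
    have hd2 : ‖lam (t + 1) + μ • g (t + 1) (x (t + 1))‖ ^ 2 ≤
        ‖lam (t + 1)‖ ^ 2 + 2 * μ * ⟪lam (t + 1), g (t + 1) (x (t + 1))⟫ + μ ^ 2 * M ^ 2 := by
      rw [norm_add_smul_sq]
      have hb : ‖g (t + 1) (x (t + 1))‖ ^ 2 ≤ M ^ 2 := by
        nlinarith [norm_nonneg (g (t + 1) (x (t + 1))), hM (t + 1) _ hxt1]
      nlinarith [sq_nonneg μ]
    have hdsq : ‖lam (t + 2)‖ ^ 2 ≤
        ‖lam (t + 1)‖ ^ 2 + 2 * μ * ⟪lam (t + 1), g (t + 1) (x (t + 1))⟫ + μ ^ 2 * M ^ 2 := by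
      nlinarith [hd1, hd2, norm_nonneg (lam (t + 2)),
        norm_nonneg (lam (t + 1) + μ • g (t + 1) (x (t + 1)))]
    have hdrift := drift_div hμ hdsq
    have e1 : (‖xstar t - x t‖ ^ 2 - ‖xstar t - x (t + 1)‖ ^ 2) / (2 * α) =
        ‖xstar t - x t‖ ^ 2 / (2 * α) - ‖xstar t - x (t + 1)‖ ^ 2 / (2 * α) := by ring
    have e2 : (‖lam (t + 1)‖ ^ 2 - ‖lam (t + 2)‖ ^ 2) / (2 * μ) =
        ‖lam (t + 1)‖ ^ 2 / (2 * μ) - ‖lam (t + 2)‖ ^ 2 / (2 * μ) := by ring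
    rw [e1, e2]
    rw [e2] at hdrift
    clear_value gr ψ L B
    linarith [hgrineq, hsplit, hsplit3, hsm, hCS, hamgm, hfeas, hsplit2, hshift, hdrift]
  -- summation
  obtain ⟨N, rfl⟩ : ∃ N, T = N + 1 := ⟨T - 1, by omega⟩
  have hIccRange : ∀ F : ℕ → ℝ, ∑ t ∈ Icc 1 (N + 1), F t = ∑ i ∈ range (N + 1), F (i + 1) := by
    intro F
    rw [show Icc 1 (N + 1) = Ico 1 (N + 2) by rw [← Finset.Ico_add_one_right_eq_Icc]; rfl,
      Finset.sum_Ico_eq_sum_range]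
    have h2 : N + 2 - 1 = N + 1 := by omega
    rw [h2]
    exact Finset.sum_congr rfl fun i _ => by rw [Nat.add_comm]
  have hcard : (Icc 1 (N + 1)).card = N + 1 := by simp
  have hsum : ∑ t ∈ Icc 1 (N + 1), (f t (x t) - f t (xstar t)) ≤
      ∑ t ∈ Icc 1 (N + 1), (α * G ^ 2 / 2 + L * v t + μ * M ^ 2 / 2 +
        (‖lam (t + 1)‖ ^ 2 - ‖lam (t + 2)‖ ^ 2) / (2 * μ) +
        (‖xstar t - x t‖ ^ 2 - ‖xstar t - x (t + 1)‖ ^ 2) / (2 * α)) :=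
    Finset.sum_le_sum fun t ht => slot t (Finset.mem_Icc.1 ht).1 (Finset.mem_Icc.1 ht).2
  rw [Finset.sum_sub_distrib] at hsum
  have hRHS : ∑ t ∈ Icc 1 (N + 1), (α * G ^ 2 / 2 + L * v t + μ * M ^ 2 / 2 +
        (‖lam (t + 1)‖ ^ 2 - ‖lam (t + 2)‖ ^ 2) / (2 * μ) +
        (‖xstar t - x t‖ ^ 2 - ‖xstar t - x (t + 1)‖ ^ 2) / (2 * α)) =
      ((N : ℝ) + 1) * (α * G ^ 2 / 2) + L * (∑ t ∈ Icc 1 (N + 1), v t) +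
        ((N : ℝ) + 1) * (μ * M ^ 2 / 2) +
        (∑ t ∈ Icc 1 (N + 1), (‖lam (t + 1)‖ ^ 2 - ‖lam (t + 2)‖ ^ 2)) / (2 * μ) +
        (∑ t ∈ Icc 1 (N + 1), (‖xstar t - x t‖ ^ 2 - ‖xstar t - x (t + 1)‖ ^ 2)) / (2 * α) := by
    simp only [Finset.sum_add_distrib, Finset.sum_div, Finset.mul_sum, Finset.sum_const,
      hcard, nsmul_eq_mul]
    push_cast
    ring
  rw [hRHS] at hsum
  -- telescope for the dual variables
  have hteleA : ∑ t ∈ Icc 1 (N + 1), (‖lam (t + 1)‖ ^ 2 - ‖lam (t + 2)‖ ^ 2) =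
      ‖lam 2‖ ^ 2 - ‖lam (N + 3)‖ ^ 2 := by
    rw [hIccRange]
    have hc : ∀ i ∈ range (N + 1), ‖lam (i + 1 + 1)‖ ^ 2 - ‖lam (i + 1 + 2)‖ ^ 2 =
        (fun j => ‖lam (j + 2)‖ ^ 2) i - (fun j => ‖lam (j + 2)‖ ^ 2) (i + 1) := by
      intro i _
      simp only
    rw [Finset.sum_congr rfl hc, Finset.sum_range_sub' (fun j => ‖lam (j + 2)‖ ^ 2) (N + 1)]
  have hlam2 : ‖lam 2‖ ≤ μ * M := by
    have hd := hdual 1 le_rfl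
    rw [hlam1, zero_add] at hd
    rw [show (2 : ℕ) = 1 + 1 from rfl, hd]
    calc ‖posProj (μ • g 1 (x 1))‖ ≤ ‖μ • g 1 (x 1)‖ := norm_posProj_le _
      _ = μ * ‖g 1 (x 1)‖ := by rw [norm_smul, Real.norm_eq_abs, abs_of_pos hμ]
      _ ≤ μ * M := mul_le_mul_of_nonneg_left (hM 1 _ (hxX 1)) hμ.le
  have hteleAb : (‖lam 2‖ ^ 2 - ‖lam (N + 3)‖ ^ 2) / (2 * μ) ≤ μ * M ^ 2 / 2 := by
    have h4 : ‖lam 2‖ ^ 2 - ‖lam (N + 3)‖ ^ 2 ≤ μ ^ 2 * M ^ 2 := by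
      nlinarith [norm_nonneg (lam 2), sq_nonneg ‖lam (N + 3)‖]
    calc (‖lam 2‖ ^ 2 - ‖lam (N + 3)‖ ^ 2) / (2 * μ) ≤ μ ^ 2 * M ^ 2 / (2 * μ) :=
          div_le_div_of_nonneg_right h4 (by linarith)
      _ = μ * M ^ 2 / 2 := by field_simp
  -- telescope for the primal variables
  have hVx : ∑ t ∈ Icc 1 (N + 1), ‖xstar t - xstar (t - 1)‖ =
      ‖xstar 1 - xstar 0‖ + ∑ i ∈ range N, ‖xstar (i + 2) - xstar (i + 1)‖ := by
    rw [hIccRange]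
    have hc : ∀ i ∈ range (N + 1), ‖xstar (i + 1) - xstar (i + 1 - 1)‖ =
        (fun j => ‖xstar (j + 1) - xstar j‖) i := by
      intro i _
      simp only [Nat.add_sub_cancel]
    rw [Finset.sum_congr rfl hc, Finset.sum_range_succ' (fun j => ‖xstar (j + 1) - xstar j‖) N]
    rw [add_comm]
  have hteleB : ∑ t ∈ Icc 1 (N + 1), (‖xstar t - x t‖ ^ 2 - ‖xstar t - x (t + 1)‖ ^ 2) ≤
      R ^ 2 + 2 * R * ∑ t ∈ Icc 1 (N + 1), ‖xstar t - xstar (t - 1)‖ := by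
    rw [hIccRange]
    have hskew : ∑ i ∈ range (N + 1),
        (‖xstar (i + 1) - x (i + 1)‖ ^ 2 - ‖xstar (i + 1) - x (i + 1 + 1)‖ ^ 2) =
        ‖xstar (0 + 1) - x (0 + 1)‖ ^ 2 - ‖xstar (N + 1) - x (N + 1 + 1)‖ ^ 2 +
          ∑ i ∈ range N, (‖xstar (i + 1 + 1) - x (i + 1 + 1)‖ ^ 2 -
            ‖xstar (i + 1) - x (i + 1 + 1)‖ ^ 2) := by
      rw [Finset.sum_sub_distrib,
        Finset.sum_range_succ' (fun i => ‖xstar (i + 1) - x (i + 1)‖ ^ 2) N,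
        Finset.sum_range_succ (fun i => ‖xstar (i + 1) - x (i + 1 + 1)‖ ^ 2) N,
        Finset.sum_sub_distrib]
      ring
    rw [hskew]
    have hb0 : ‖xstar (0 + 1) - x (0 + 1)‖ ^ 2 ≤ R ^ 2 := by
      have h := hR _ (hxstar 1 (by omega) (by omega)).1 _ (hxX 1)
      have h0 : (0 : ℕ) + 1 = 1 := rfl
      rw [h0]
      nlinarith [norm_nonneg (xstar 1 - x 1)]
    have hcN : 0 ≤ ‖xstar (N + 1) - x (N + 1 + 1)‖ ^ 2 := sq_nonneg _
    have hpair : ∀ i ∈ range N, ‖xstar (i + 1 + 1) - x (i + 1 + 1)‖ ^ 2 -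
        ‖xstar (i + 1) - x (i + 1 + 1)‖ ^ 2 ≤ 2 * R * ‖xstar (i + 1 + 1) - xstar (i + 1)‖ := by
      intro i hi
      have hiN := Finset.mem_range.1 hi
      exact sq_diff_le (hR _ (hxstar (i + 1 + 1) (by omega) (by omega)).1 _ (hxX (i + 1 + 1)))
        (hR _ (hxstar (i + 1) (by omega) (by omega)).1 _ (hxX (i + 1 + 1)))
    have hsum2 := Finset.sum_le_sum hpair
    have hVx2 : ∑ i ∈ range N, 2 * R * ‖xstar (i + 1 + 1) - xstar (i + 1)‖ ≤
        2 * R * ∑ t ∈ Icc 1 (N + 1), ‖xstar t - xstar (t - 1)‖ := by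
      rw [hVx, mul_add, Finset.mul_sum]
      have : ∑ i ∈ range N, 2 * R * ‖xstar (i + 1 + 1) - xstar (i + 1)‖ =
          ∑ i ∈ range N, 2 * R * ‖xstar (i + 2) - xstar (i + 1)‖ :=
        Finset.sum_congr rfl fun i _ => by
          have e1 : i + 1 + 1 = i + 2 := by omega
          rw [e1]
      rw [this]
      have h2R : 0 ≤ 2 * R * ‖xstar 1 - xstar 0‖ := by positivity
      linarith
    linarith
  -- put everything together
  have hteleBdiv : (∑ t ∈ Icc 1 (N + 1),
        (‖xstar t - x t‖ ^ 2 - ‖xstar t - x (t + 1)‖ ^ 2)) / (2 * α) ≤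
      (R ^ 2 + 2 * R * ∑ t ∈ Icc 1 (N + 1), ‖xstar t - xstar (t - 1)‖) / (2 * α) :=
    div_le_div_of_nonneg_right hteleB (by linarith)
  have heq : (R ^ 2 + 2 * R * ∑ t ∈ Icc 1 (N + 1), ‖xstar t - xstar (t - 1)‖) / (2 * α) =
      R ^ 2 / (2 * α) + R / α * ∑ t ∈ Icc 1 (N + 1), ‖xstar t - xstar (t - 1)‖ := by
    field_simp
  rw [heq] at hteleBdiv
  rw [hteleA] at hsum
  push_cast
  clear_value L B
  linarith [hsum, hteleAb, hteleBdiv]
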